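/- With Ω the Casimir element of U_q(f_m(K)), the projection satisfies π(Ω) = η(E)·F + (q^{2m}K^m + K^{−m})/((q^{2m} − 1)(q − q^{−1})). -/

import Mathlib

noncomputable section

inductive UqGen : Type
  | E : UqGen
  | F : UqGen
  | K : UqGen
  | Kinv : UqGen

def lpow {A : Type*} [Monoid A] (x xinv : A) (n : ℤ) : A :=
  if 0 ≤ n then x ^ n.toNat else xinv ^ (-n).toNat

open FreeAlgebra in
inductive UqRel (q : ℂ) (m : ℕ) : FreeAlgebra ℂ UqGen → FreeAlgebra ℂ UqGen → Prop
  | KE : UqRel q m (ι ℂ UqGen.K * ι ℂ UqGen.E) (q ^ 2 • (ι ℂ UqGen.E * ι ℂ UqGen.K))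
  | KF : UqRel q m (ι ℂ UqGen.K * ι ℂ UqGen.F) ((q ^ 2)⁻¹ • (ι ℂ UqGen.F * ι ℂ UqGen.K))
  | KKinv : UqRel q m (ι ℂ UqGen.K * ι ℂ UqGen.Kinv) 1
  | KinvK : UqRel q m (ι ℂ UqGen.Kinv * ι ℂ UqGen.K) 1
  | EF : UqRel q m (ι ℂ UqGen.E * ι ℂ UqGen.F - ι ℂ UqGen.F * ι ℂ UqGen.E)
      ((q - q⁻¹)⁻¹ • ((ι ℂ UqGen.K) ^ m - (ι ℂ UqGen.Kinv) ^ m))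

abbrev Uq (q : ℂ) (m : ℕ) : Type := RingQuot (UqRel q m)

def Egen (q : ℂ) (m : ℕ) : Uq q m := RingQuot.mkAlgHom ℂ (UqRel q m) (FreeAlgebra.ι ℂ UqGen.E)
def Fgen (q : ℂ) (m : ℕ) : Uq q m := RingQuot.mkAlgHom ℂ (UqRel q m) (FreeAlgebra.ι ℂ UqGen.F)
def Kgen (q : ℂ) (m : ℕ) : Uq q m := RingQuot.mkAlgHom ℂ (UqRel q m) (FreeAlgebra.ι ℂ UqGen.K)
def Kinvgen (q : ℂ) (m : ℕ) : Uq q m := RingQuot.mkAlgHom ℂ (UqRel q m) (FreeAlgebra.ι ℂ UqGen.Kinv)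

def Kzpow (q : ℂ) (m : ℕ) (n : ℤ) : Uq q m := lpow (Kgen q m) (Kinvgen q m) n

def Casimir (q : ℂ) (m : ℕ) : Uq q m :=
  Fgen q m * Egen q m +
    (((q ^ (2 * m) - 1) * (q - q⁻¹))⁻¹ * q ^ (2 * m)) • Kgen q m ^ m +
    ((q ^ (2 * m) - 1) * (q - q⁻¹))⁻¹ • Kinvgen q m ^ m




abbrev VV : Type := (ℕ × ℤ) →₀ ℂ

def bV (p : ℕ × ℤ) : VV := Finsupp.single p 1

def spn (v : VV) : ℂ →ₗ[ℂ] VV := LinearMap.toSpanSingleton ℂ VV v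

def Fop : Module.End ℂ VV := Finsupp.lsum ℂ fun p => spn (bV (p.1 + 1, p.2))

def Kop (q : ℂ) : Module.End ℂ VV :=
  Finsupp.lsum ℂ fun p => spn (q ^ (-(2 * (p.1 : ℤ))) • bV (p.1, p.2 + 1))

def KIop (q : ℂ) : Module.End ℂ VV :=
  Finsupp.lsum ℂ fun p => spn (q ^ (2 * (p.1 : ℤ)) • bV (p.1, p.2 - 1))

def Sm (q : ℂ) (m : ℕ) (a : ℕ) : ℂ := ∑ j ∈ Finset.range a, q ^ (-(2 * (m : ℤ) * (j : ℤ)))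
def Sp (q : ℂ) (m : ℕ) (a : ℕ) : ℂ := ∑ j ∈ Finset.range a, q ^ (2 * (m : ℤ) * (j : ℤ))

def Eop (q c : ℂ) (m : ℕ) : Module.End ℂ VV :=
  Finsupp.lsum ℂ fun p => spn ((c * q ^ (-(2 * p.2))) • bV p +
    (q - q⁻¹)⁻¹ • (Sm q m p.1 • bV (p.1 - 1, p.2 + m) - Sp q m p.1 • bV (p.1 - 1, p.2 - m)))

lemma lsum_bV (f : ℕ × ℤ → ℂ →ₗ[ℂ] VV) (p : ℕ × ℤ) :
    Finsupp.lsum ℂ f (bV p) = f p 1 := Finsupp.lsum_single ℂ f p 1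

lemma Fop_bV (a : ℕ) (b : ℤ) : Fop (bV (a, b)) = bV (a + 1, b) := by
  simp [Fop, lsum_bV, spn, LinearMap.toSpanSingleton_apply]

lemma Kop_bV (q : ℂ) (a : ℕ) (b : ℤ) :
    Kop q (bV (a, b)) = q ^ (-(2 * (a : ℤ))) • bV (a, b + 1) := by
  simp [Kop, lsum_bV, spn, LinearMap.toSpanSingleton_apply]

lemma KIop_bV (q : ℂ) (a : ℕ) (b : ℤ) :
    KIop q (bV (a, b)) = q ^ (2 * (a : ℤ)) • bV (a, b - 1) := by
  simp [KIop, lsum_bV, spn, LinearMap.toSpanSingleton_apply]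

lemma Eop_bV (q c : ℂ) (m : ℕ) (a : ℕ) (b : ℤ) :
    Eop q c m (bV (a, b)) = (c * q ^ (-(2 * b))) • bV (a, b) +
      (q - q⁻¹)⁻¹ • (Sm q m a • bV (a - 1, b + m) - Sp q m a • bV (a - 1, b - m)) := by
  simp [Eop, lsum_bV, spn, LinearMap.toSpanSingleton_apply]

lemma endVV_ext {f g : Module.End ℂ VV} (h : ∀ p, f (bV p) = g (bV p)) : f = g := by
  apply Finsupp.lhom_ext
  intro a b
  have hb : (Finsupp.single a b : VV) = b • bV a := by simp [bV, Finsupp.smul_single]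
  rw [hb, map_smul, map_smul, h]

lemma Kop_pow_bV (q : ℂ) (hq0 : q ≠ 0) (k a : ℕ) (b : ℤ) :
    ((Kop q) ^ k) (bV (a, b)) = q ^ (-(2 * (a : ℤ) * (k : ℤ))) • bV (a, b + k) := by
  induction k generalizing b with
  | zero => simp
  | succ k ih =>
    rw [pow_succ, Module.End.mul_apply, Kop_bV, map_smul, ih, smul_smul, ← zpow_add₀ hq0]
    congr 2
    · push_cast; ring
    · push_cast; ring

lemma KIop_pow_bV (q : ℂ) (hq0 : q ≠ 0) (k a : ℕ) (b : ℤ) :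
    ((KIop q) ^ k) (bV (a, b)) = q ^ (2 * (a : ℤ) * (k : ℤ)) • bV (a, b - k) := by
  induction k generalizing b with
  | zero => simp
  | succ k ih =>
    rw [pow_succ, Module.End.mul_apply, KIop_bV, map_smul, ih, smul_smul, ← zpow_add₀ hq0]
    congr 2
    · push_cast; ring
    · push_cast; ring

lemma Fop_pow_bV (k a : ℕ) (b : ℤ) : (Fop ^ k) (bV (a, b)) = bV (a + k, b) := by
  induction k generalizing a with
  | zero => simp
  | succ k ih => rw [pow_succ, Module.End.mul_apply, Fop_bV, ih]; congr 2; omega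

lemma Sm_zero (q : ℂ) (m : ℕ) : Sm q m 0 = 0 := by simp [Sm]
lemma Sp_zero (q : ℂ) (m : ℕ) : Sp q m 0 = 0 := by simp [Sp]

lemma rel_KF (q : ℂ) (hq0 : q ≠ 0) : Kop q * Fop = (q ^ 2)⁻¹ • (Fop * Kop q) := by
  apply endVV_ext; rintro ⟨a, b⟩
  rw [Module.End.mul_apply, LinearMap.smul_apply, Module.End.mul_apply, Fop_bV, Kop_bV, Kop_bV,
    map_smul, Fop_bV, smul_smul, ← zpow_natCast q 2, ← zpow_neg, ← zpow_add₀ hq0]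
  congr 2
  push_cast; ring

lemma rel_KKI (q : ℂ) (hq0 : q ≠ 0) : Kop q * KIop q = 1 := by
  apply endVV_ext; rintro ⟨a, b⟩
  rw [Module.End.mul_apply, KIop_bV, map_smul, Kop_bV, smul_smul, ← zpow_add₀ hq0]
  simp

lemma rel_KIK (q : ℂ) (hq0 : q ≠ 0) : KIop q * Kop q = 1 := by
  apply endVV_ext; rintro ⟨a, b⟩
  rw [Module.End.mul_apply, Kop_bV, map_smul, KIop_bV, smul_smul, ← zpow_add₀ hq0]
  simp


lemma Sm_succ (q : ℂ) (m a : ℕ) :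
    Sm q m (a + 1) = Sm q m a + q ^ (-(2 * (m : ℤ) * (a : ℤ))) := Finset.sum_range_succ _ _

lemma Sp_succ (q : ℂ) (m a : ℕ) :
    Sp q m (a + 1) = Sp q m a + q ^ (2 * (m : ℤ) * (a : ℤ)) := Finset.sum_range_succ _ _

lemma rel_KE (q c : ℂ) (m : ℕ) (hq0 : q ≠ 0) :
    Kop q * Eop q c m = q ^ 2 • (Eop q c m * Kop q) := by
  have hz : ∀ n : ℤ, q ^ n ≠ 0 := fun n => zpow_ne_zero n hq0
  apply endVV_ext; rintro ⟨a, b⟩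
  rcases a with _ | a <;>
  · simp only [Module.End.mul_apply, LinearMap.smul_apply, Eop_bV, Kop_bV, Sm_zero, Sp_zero,
      zero_smul, sub_zero, smul_zero, add_zero, map_add, map_smul, map_sub, Nat.add_sub_cancel]
    generalize (q - q⁻¹)⁻¹ = kk
    push_cast
    ring_nf
    match_scalars <;>
    first
      | ring1
      | (field_simp [zpow_sub₀ hq0, zpow_neg, zpow_add₀ hq0, zpow_mul, zpow_natCast,
           zpow_ofNat, hz]
         first
           | rfl
           | ring1
           | (rw [← zpow_natCast q 2]; simp only [mul_assoc, ← zpow_add₀ hq0]; push_cast; ring_nf; done)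
           | (rw [div_eq_div_iff (by simp [pow_eq_zero_iff, hz, hq0])
                (by simp [pow_eq_zero_iff, hz, hq0])]; ring1))

lemma rel_EF (q c : ℂ) (m : ℕ) (hq0 : q ≠ 0) :
    Eop q c m * Fop - Fop * Eop q c m = (q - q⁻¹)⁻¹ • ((Kop q) ^ m - (KIop q) ^ m) := by
  have hz : ∀ n : ℤ, q ^ n ≠ 0 := fun n => zpow_ne_zero n hq0
  apply endVV_ext; rintro ⟨a, b⟩
  rcases a with _ | a <;>
  · simp only [LinearMap.sub_apply, Module.End.mul_apply, LinearMap.smul_apply, Eop_bV, Fop_bV,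
      Sm_zero, Sp_zero, zero_smul, sub_zero, smul_zero, add_zero, map_add, map_smul, map_sub,
      Kop_pow_bV q hq0, KIop_pow_bV q hq0, Nat.add_sub_cancel, Sm_succ, Sp_succ]
    generalize (q - q⁻¹)⁻¹ = kk
    push_cast
    ring_nf
    match_scalars <;>
    first
      | ring1
      | (field_simp [zpow_sub₀ hq0, zpow_neg, zpow_add₀ hq0, zpow_mul, zpow_natCast,
           zpow_ofNat, hz]
         first
           | rfl
           | ring1
           | (rw [div_eq_div_iff (by simp [pow_eq_zero_iff, hz, hq0])
                (by simp [pow_eq_zero_iff, hz, hq0])]; ring1))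

/-! The representation -/

def gens (q c : ℂ) (m : ℕ) : UqGen → Module.End ℂ VV
  | UqGen.E => Eop q c m
  | UqGen.F => Fop
  | UqGen.K => Kop q
  | UqGen.Kinv => KIop q

def rho (q c : ℂ) (m : ℕ) (hq0 : q ≠ 0) : Uq q m →ₐ[ℂ] Module.End ℂ VV :=
  RingQuot.liftAlgHom ℂ ⟨FreeAlgebra.lift ℂ (gens q c m), by
    intro x y h
    cases h <;>
      simp only [map_mul, map_smul, map_sub, map_pow, map_one, FreeAlgebra.lift_ι_apply, gens]
    · exact rel_KE q c m hq0
    · exact rel_KF q hq0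
    · exact rel_KKI q hq0
    · exact rel_KIK q hq0
    · exact rel_EF q c m hq0⟩

lemma rho_E (q c : ℂ) (m : ℕ) (hq0 : q ≠ 0) : rho q c m hq0 (Egen q m) = Eop q c m := by
  simp [rho, Egen, RingQuot.liftAlgHom_mkAlgHom_apply, FreeAlgebra.lift_ι_apply, gens]

lemma rho_F (q c : ℂ) (m : ℕ) (hq0 : q ≠ 0) : rho q c m hq0 (Fgen q m) = Fop := by
  simp [rho, Fgen, RingQuot.liftAlgHom_mkAlgHom_apply, FreeAlgebra.lift_ι_apply, gens]

lemma rho_K (q c : ℂ) (m : ℕ) (hq0 : q ≠ 0) : rho q c m hq0 (Kgen q m) = Kop q := by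
  simp [rho, Kgen, RingQuot.liftAlgHom_mkAlgHom_apply, FreeAlgebra.lift_ι_apply, gens]

lemma rho_KI (q c : ℂ) (m : ℕ) (hq0 : q ≠ 0) : rho q c m hq0 (Kinvgen q m) = KIop q := by
  simp [rho, Kinvgen, RingQuot.liftAlgHom_mkAlgHom_apply, FreeAlgebra.lift_ι_apply, gens]

/-! Relations in Uq -/

lemma U_KKinv (q : ℂ) (m : ℕ) : Kgen q m * Kinvgen q m = 1 := by
  have := RingQuot.mkAlgHom_rel ℂ (UqRel.KKinv (q := q) (m := m))
  simpa [map_mul, map_one, Kgen, Kinvgen] using this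

lemma U_KinvK (q : ℂ) (m : ℕ) : Kinvgen q m * Kgen q m = 1 := by
  have := RingQuot.mkAlgHom_rel ℂ (UqRel.KinvK (q := q) (m := m))
  simpa [map_mul, map_one, Kgen, Kinvgen] using this

lemma U_KF (q : ℂ) (m : ℕ) :
    Kgen q m * Fgen q m = (q ^ 2)⁻¹ • (Fgen q m * Kgen q m) := by
  have := RingQuot.mkAlgHom_rel ℂ (UqRel.KF (q := q) (m := m))
  simpa [map_mul, map_smul, Kgen, Fgen] using this

def Ku (q : ℂ) (m : ℕ) : (Uq q m)ˣ := ⟨Kgen q m, Kinvgen q m, U_KKinv q m, U_KinvK q m⟩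

lemma Kzpow_units (q : ℂ) (m : ℕ) (n : ℤ) : Kzpow q m n = ((Ku q m) ^ n : (Uq q m)ˣ) := by
  cases n with
  | ofNat k => simp [Kzpow, lpow, Ku, zpow_natCast, Units.val_pow_eq_pow_val]
  | negSucc k =>
    rw [Kzpow, lpow, if_neg (Int.negSucc_lt_zero k).not_ge]
    simp [zpow_negSucc, ← inv_pow, Ku, Units.val_pow_eq_pow_val, Int.neg_negSucc]

lemma Kzpow_add (q : ℂ) (m : ℕ) (n n' : ℤ) :
    Kzpow q m (n + n') = Kzpow q m n * Kzpow q m n' := by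
  simp [Kzpow_units, zpow_add, Units.val_mul]

lemma Kzpow_zero (q : ℂ) (m : ℕ) : Kzpow q m 0 = 1 := by simp [Kzpow, lpow]
lemma Kzpow_one (q : ℂ) (m : ℕ) : Kzpow q m 1 = Kgen q m := by simp [Kzpow, lpow]
lemma Kzpow_negone (q : ℂ) (m : ℕ) : Kzpow q m (-1) = Kinvgen q m := by
  rw [Kzpow, lpow, if_neg (by omega)]; simp


lemma U_FK (q : ℂ) (m : ℕ) (hq0 : q ≠ 0) :
    Fgen q m * Kgen q m = q ^ 2 • (Kgen q m * Fgen q m) := by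
  rw [U_KF q m, smul_smul, mul_inv_cancel₀ (pow_ne_zero 2 hq0), one_smul]

lemma U_KinvF (q : ℂ) (m : ℕ) (hq0 : q ≠ 0) :
    Kinvgen q m * Fgen q m = q ^ 2 • (Fgen q m * Kinvgen q m) := by
  calc Kinvgen q m * Fgen q m
      = Kinvgen q m * Fgen q m * (Kgen q m * Kinvgen q m) := by rw [U_KKinv, mul_one]
    _ = Kinvgen q m * (Fgen q m * Kgen q m) * Kinvgen q m := by noncomm_ring
    _ = Kinvgen q m * (q ^ 2 • (Kgen q m * Fgen q m)) * Kinvgen q m := by rw [U_FK q m hq0]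
    _ = q ^ 2 • (Kinvgen q m * (Kgen q m * Fgen q m) * Kinvgen q m) := by
        rw [mul_smul_comm, smul_mul_assoc]
    _ = q ^ 2 • (Kinvgen q m * Kgen q m * (Fgen q m * Kinvgen q m)) := by
        congr 1; noncomm_ring
    _ = q ^ 2 • (Fgen q m * Kinvgen q m) := by rw [U_KinvK, one_mul]

lemma Kzpow_F (q : ℂ) (m : ℕ) (hq0 : q ≠ 0) (n : ℤ) :
    Kzpow q m n * Fgen q m = q ^ (-(2 * n)) • (Fgen q m * Kzpow q m n) := by
  induction n using Int.induction_on with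
  | zero => simp [Kzpow_zero]
  | succ k ih =>
    calc Kzpow q m (k + 1) * Fgen q m
        = Kzpow q m k * (Kgen q m * Fgen q m) := by rw [Kzpow_add, Kzpow_one, mul_assoc]
      _ = (q ^ 2)⁻¹ • (Kzpow q m k * (Fgen q m * Kgen q m)) := by rw [U_KF, mul_smul_comm]
      _ = (q ^ 2)⁻¹ • (Kzpow q m k * Fgen q m * Kgen q m) := by rw [mul_assoc]
      _ = (q ^ 2)⁻¹ • (q ^ (-(2 * (k : ℤ))) • (Fgen q m * Kzpow q m k) * Kgen q m) := by
          rw [ih]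
      _ = ((q ^ 2)⁻¹ * q ^ (-(2 * (k : ℤ)))) • (Fgen q m * (Kzpow q m k * Kgen q m)) := by
          rw [smul_mul_assoc, smul_smul, mul_assoc]
      _ = q ^ (-(2 * ((k : ℤ) + 1))) • (Fgen q m * Kzpow q m ((k : ℤ) + 1)) := by
          rw [← Kzpow_one q m, ← Kzpow_add, ← zpow_natCast q 2, ← zpow_neg, ← zpow_add₀ hq0]
          congr 2
          all_goals push_cast
          all_goals ring
  | pred k ih =>
    calc Kzpow q m (-(k : ℤ) - 1) * Fgen q m
        = Kzpow q m (-(k : ℤ)) * (Kinvgen q m * Fgen q m) := by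
          rw [show (-(k : ℤ) - 1) = -(k : ℤ) + -1 from by ring, Kzpow_add, Kzpow_negone,
            mul_assoc]
      _ = q ^ 2 • (Kzpow q m (-(k : ℤ)) * (Fgen q m * Kinvgen q m)) := by
          rw [U_KinvF q m hq0, mul_smul_comm]
      _ = q ^ 2 • (Kzpow q m (-(k : ℤ)) * Fgen q m * Kinvgen q m) := by rw [mul_assoc]
      _ = q ^ 2 • (q ^ (-(2 * -(k : ℤ))) • (Fgen q m * Kzpow q m (-(k : ℤ))) * Kinvgen q m) := by
          rw [ih]
      _ = (q ^ 2 * q ^ (-(2 * -(k : ℤ)))) • (Fgen q m * (Kzpow q m (-(k : ℤ)) * Kinvgen q m)) := by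
          rw [smul_mul_assoc, smul_smul, mul_assoc]
      _ = q ^ (-(2 * (-(k : ℤ) - 1))) • (Fgen q m * Kzpow q m (-(k : ℤ) - 1)) := by
          rw [← Kzpow_negone q m, ← Kzpow_add, ← zpow_natCast q 2, ← zpow_add₀ hq0]
          congr 2
          all_goals push_cast
          all_goals ring

lemma Kzpow_Fpow (q : ℂ) (m : ℕ) (hq0 : q ≠ 0) (n : ℤ) (a : ℕ) :
    Kzpow q m n * Fgen q m ^ a = q ^ (-(2 * n * a)) • (Fgen q m ^ a * Kzpow q m n) := by
  induction a with
  | zero => simp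
  | succ a ih =>
    push_cast
    calc Kzpow q m n * Fgen q m ^ (a + 1)
        = Kzpow q m n * Fgen q m ^ a * Fgen q m := by rw [pow_succ, ← mul_assoc]
      _ = q ^ (-(2 * n * a)) • (Fgen q m ^ a * Kzpow q m n) * Fgen q m := by rw [ih]
      _ = q ^ (-(2 * n * a)) • (Fgen q m ^ a * (Kzpow q m n * Fgen q m)) := by
          rw [smul_mul_assoc]
          congr 1
          exact mul_assoc _ _ _
      _ = (q ^ (-(2 * n * (a : ℤ))) * q ^ (-(2 * n))) •
          (Fgen q m ^ a * (Fgen q m * Kzpow q m n)) := by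
          rw [Kzpow_F q m hq0, mul_smul_comm, smul_smul]
      _ = q ^ (-(2 * n * ((a : ℤ) + 1))) • (Fgen q m ^ (a + 1) * Kzpow q m n) := by
          rw [← mul_assoc, ← pow_succ, ← zpow_add₀ hq0]
          congr 2
          all_goals push_cast
          all_goals ring

/-! Monomials -/

def Mon (q : ℂ) (m : ℕ) (p : ℕ × ℤ) : Uq q m := Fgen q m ^ p.1 * Kzpow q m p.2

lemma Mon_mul (q : ℂ) (m : ℕ) (hq0 : q ≠ 0) (p p' : ℕ × ℤ) :
    Mon q m p * Mon q m p' =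
      q ^ (-(2 * p.2 * p'.1)) • Mon q m (p.1 + p'.1, p.2 + p'.2) := by
  unfold Mon
  calc Fgen q m ^ p.1 * Kzpow q m p.2 * (Fgen q m ^ p'.1 * Kzpow q m p'.2)
      = Fgen q m ^ p.1 * (Kzpow q m p.2 * Fgen q m ^ p'.1) * Kzpow q m p'.2 := by
        noncomm_ring
    _ = q ^ (-(2 * p.2 * p'.1)) •
        (Fgen q m ^ p.1 * (Fgen q m ^ p'.1 * Kzpow q m p.2) * Kzpow q m p'.2) := by
        rw [Kzpow_Fpow q m hq0, mul_smul_comm, smul_mul_assoc]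
    _ = q ^ (-(2 * p.2 * p'.1)) • (Fgen q m ^ (p.1 + p'.1) * Kzpow q m (p.2 + p'.2)) := by
        congr 1
        rw [pow_add, Kzpow_add]
        noncomm_ring

def MSpan (q : ℂ) (m : ℕ) : Submodule ℂ (Uq q m) := Submodule.span ℂ (Set.range (Mon q m))

lemma Mon_mem_MSpan (q : ℂ) (m : ℕ) (p : ℕ × ℤ) : Mon q m p ∈ MSpan q m :=
  Submodule.subset_span ⟨p, rfl⟩

lemma MSpan_one (q : ℂ) (m : ℕ) : (1 : Uq q m) ∈ MSpan q m := by
  have : Mon q m (0, 0) = 1 := by simp [Mon, Kzpow_zero]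
  rw [← this]; exact Mon_mem_MSpan q m _

lemma MSpan_mul (q : ℂ) (m : ℕ) (hq0 : q ≠ 0) {x y : Uq q m}
    (hx : x ∈ MSpan q m) (hy : y ∈ MSpan q m) : x * y ∈ MSpan q m := by
  induction hx using Submodule.span_induction with
  | mem x hx =>
    obtain ⟨p, rfl⟩ := hx
    induction hy using Submodule.span_induction with
    | mem y hy =>
      obtain ⟨p', rfl⟩ := hy
      rw [Mon_mul q m hq0]
      exact Submodule.smul_mem _ _ (Mon_mem_MSpan q m _)
    | zero => simp [MSpan]
    | add y z _ _ hy hz => rw [mul_add]; exact Submodule.add_mem _ hy hz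
    | smul a y _ hy => rw [mul_smul_comm]; exact Submodule.smul_mem _ _ hy
  | zero => simp [MSpan]
  | add x z _ _ hx hz => rw [add_mul]; exact Submodule.add_mem _ hx hz
  | smul a x _ hx => rw [smul_mul_assoc]; exact Submodule.smul_mem _ _ hx

lemma adjoin_le_MSpan (q : ℂ) (m : ℕ) (hq0 : q ≠ 0) {u : Uq q m}
    (hu : u ∈ Algebra.adjoin ℂ ({Fgen q m, Kgen q m, Kinvgen q m} : Set (Uq q m))) :
    u ∈ MSpan q m := by
  induction hu using Algebra.adjoin_induction with
  | mem x hx =>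
    rcases hx with rfl | rfl | rfl
    · have : Mon q m (1, 0) = Fgen q m := by simp [Mon, Kzpow_zero]
      rw [← this]; exact Mon_mem_MSpan q m _
    · have : Mon q m (0, 1) = Kgen q m := by simp [Mon, Kzpow_one]
      rw [← this]; exact Mon_mem_MSpan q m _
    · have : Mon q m (0, -1) = Kinvgen q m := by simp [Mon, Kzpow_negone]
      rw [← this]; exact Mon_mem_MSpan q m _
  | algebraMap r =>
    rw [Algebra.algebraMap_eq_smul_one]
    exact Submodule.smul_mem _ _ (MSpan_one q m)
  | add x y _ _ hx hy => exact Submodule.add_mem _ hx hy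
  | mul x y _ _ hx hy => exact MSpan_mul q m hq0 hx hy


lemma rho_Kzpow_v00 (q c : ℂ) (m : ℕ) (hq0 : q ≠ 0) (n : ℤ) :
    rho q c m hq0 (Kzpow q m n) (bV (0, 0)) = bV (0, n) := by
  cases n with
  | ofNat k =>
    have : Kzpow q m (Int.ofNat k) = Kgen q m ^ k := by simp [Kzpow, lpow]
    rw [this, map_pow, rho_K, Kop_pow_bV q hq0]
    simp
  | negSucc k =>
    have : Kzpow q m (Int.negSucc k) = Kinvgen q m ^ (k + 1) := by
      rw [Kzpow, lpow, if_neg (Int.negSucc_lt_zero k).not_ge]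
      simp [Int.neg_negSucc]
    rw [this, map_pow, rho_KI, KIop_pow_bV q hq0]
    simp [Int.negSucc_eq]

lemma ev_Mon (q c : ℂ) (m : ℕ) (hq0 : q ≠ 0) (p : ℕ × ℤ) :
    rho q c m hq0 (Mon q m p) (bV (0, 0)) = bV p := by
  rw [Mon, map_mul, Module.End.mul_apply, rho_Kzpow_v00, map_pow, rho_F, Fop_pow_bV]
  simp

lemma rho_adjoinE (q : ℂ) (m : ℕ) (hq0 : q ≠ 0)
    (η : ↥(Algebra.adjoin ℂ ({Egen q m} : Set (Uq q m))) →ₐ[ℂ] ℂ)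
    {x : Uq q m} (hx : x ∈ Algebra.adjoin ℂ ({Egen q m} : Set (Uq q m))) :
    rho q (η ⟨Egen q m, Algebra.subset_adjoin (Set.mem_singleton _)⟩) m hq0 x (bV (0, 0)) =
      η ⟨x, hx⟩ • bV (0, 0) := by
  set c := η ⟨Egen q m, Algebra.subset_adjoin (Set.mem_singleton _)⟩ with hc
  induction hx using Algebra.adjoin_induction with
  | mem y hy =>
    rcases hy with rfl
    rw [rho_E, Eop_bV]
    simp [Sm_zero, Sp_zero, hc]
  | algebraMap r =>
    have h1 : (⟨algebraMap ℂ (Uq q m) r, Subalgebra.algebraMap_mem _ r⟩ :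
        ↥(Algebra.adjoin ℂ ({Egen q m} : Set (Uq q m)))) =
        algebraMap ℂ _ r := by
      apply Subtype.ext
      simp
    rw [AlgHom.commutes, h1, AlgHom.commutes]
    simp [Algebra.algebraMap_eq_smul_one]
  | add x y hxm hym hx hy =>
    have h1 : (⟨x + y, add_mem hxm hym⟩ :
        ↥(Algebra.adjoin ℂ ({Egen q m} : Set (Uq q m)))) = ⟨x, hxm⟩ + ⟨y, hym⟩ := rfl
    rw [map_add, LinearMap.add_apply, hx, hy, h1, map_add, add_smul]
  | mul x y hxm hym hx hy =>
    have h1 : (⟨x * y, mul_mem hxm hym⟩ :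
        ↥(Algebra.adjoin ℂ ({Egen q m} : Set (Uq q m)))) = ⟨x, hxm⟩ * ⟨y, hym⟩ := rfl
    rw [map_mul, Module.End.mul_apply, hy, map_smul, hx, h1, map_mul, smul_smul, mul_comm]

lemma ev_ker (q : ℂ) (m : ℕ) (hq0 : q ≠ 0)
    (η : ↥(Algebra.adjoin ℂ ({Egen q m} : Set (Uq q m))) →ₐ[ℂ] ℂ)
    {z : Uq q m}
    (hz : z ∈ Submodule.span ℂ {z : Uq q m |
      ∃ (w : Uq q m) (x : ↥(Algebra.adjoin ℂ ({Egen q m} : Set (Uq q m)))),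
        η x = 0 ∧ z = w * (x : Uq q m)}) :
    rho q (η ⟨Egen q m, Algebra.subset_adjoin (Set.mem_singleton _)⟩) m hq0 z (bV (0, 0)) =
      0 := by
  induction hz using Submodule.span_induction with
  | mem z hzm =>
    obtain ⟨w, x, hx0, rfl⟩ := hzm
    rw [map_mul, Module.End.mul_apply, rho_adjoinE q m hq0 η x.2]
    simp [Subtype.coe_eta, hx0]
  | zero => simp
  | add x y _ _ hx hy => rw [map_add, LinearMap.add_apply, hx, hy, add_zero]
  | smul a x _ hx => rw [map_smul, LinearMap.smul_apply, hx, smul_zero]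

def Lmap (q : ℂ) (m : ℕ) : VV →ₗ[ℂ] Uq q m :=
  Finsupp.lsum ℂ fun p => LinearMap.toSpanSingleton ℂ _ (Mon q m p)

lemma Lmap_bV (q : ℂ) (m : ℕ) (p : ℕ × ℤ) : Lmap q m (bV p) = Mon q m p := by
  rw [Lmap, bV, Finsupp.lsum_single]
  simp [LinearMap.toSpanSingleton_apply]

lemma Lmap_ev (q c : ℂ) (m : ℕ) (hq0 : q ≠ 0) {u : Uq q m} (hu : u ∈ MSpan q m) :
    Lmap q m (rho q c m hq0 u (bV (0, 0))) = u := by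
  induction hu using Submodule.span_induction with
  | mem u hum =>
    obtain ⟨p, rfl⟩ := hum
    rw [ev_Mon q c m hq0, Lmap_bV]
  | zero => simp
  | add x y _ _ hx hy => rw [map_add, LinearMap.add_apply, map_add, hx, hy]
  | smul a x _ hx => rw [map_smul, LinearMap.smul_apply, map_smul, hx]

/-- With `Ω` the Casimir element of `U_q(f_m(K))` and `π` the projection
onto `U_q(F, K^{±1})` along `U_q(f_m(K))·ker η`, one has
`π(Ω) = η(E)·F + (q^{2m}K^m + K^{-m})/((q^{2m} - 1)(q - q⁻¹))`. -/
theorem stmt11 (q : ℂ) (m : ℕ) (hm : 1 ≤ m) (hq0 : q ≠ 0)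
    (hq : ∀ k : ℕ, 0 < k → q ^ k ≠ 1)
    (η : ↥(Algebra.adjoin ℂ ({Egen q m} : Set (Uq q m))) →ₐ[ℂ] ℂ)
    (hη : η ⟨Egen q m, Algebra.subset_adjoin (Set.mem_singleton _)⟩ ≠ 0)
    (π : Uq q m →ₗ[ℂ] Uq q m)
    (hπ1 : ∀ u : Uq q m,
      π u ∈ Algebra.adjoin ℂ ({Fgen q m, Kgen q m, Kinvgen q m} : Set (Uq q m)))
    (hπ2 : ∀ u : Uq q m,
      u - π u ∈ Submodule.span ℂ {z : Uq q m |
        ∃ (w : Uq q m) (x : ↥(Algebra.adjoin ℂ ({Egen q m} : Set (Uq q m)))),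
          η x = 0 ∧ z = w * (x : Uq q m)}) :
    π (Casimir q m) =
      η ⟨Egen q m, Algebra.subset_adjoin (Set.mem_singleton _)⟩ • Fgen q m +
        (((q ^ (2 * m) - 1) * (q - q⁻¹))⁻¹ * q ^ (2 * m)) • Kgen q m ^ m +
        ((q ^ (2 * m) - 1) * (q - q⁻¹))⁻¹ • Kinvgen q m ^ m := by
  set c := η ⟨Egen q m, Algebra.subset_adjoin (Set.mem_singleton _)⟩ with hc
  set R : Uq q m := c • Fgen q m +
      (((q ^ (2 * m) - 1) * (q - q⁻¹))⁻¹ * q ^ (2 * m)) • Kgen q m ^ m +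
      ((q ^ (2 * m) - 1) * (q - q⁻¹))⁻¹ • Kinvgen q m ^ m with hR
  -- R lies in the subalgebra generated by F, K, Kinv
  have hRadj : R ∈ Algebra.adjoin ℂ ({Fgen q m, Kgen q m, Kinvgen q m} : Set (Uq q m)) := by
    have hF : Fgen q m ∈ Algebra.adjoin ℂ ({Fgen q m, Kgen q m, Kinvgen q m} : Set (Uq q m)) :=
      Algebra.subset_adjoin (by simp)
    have hK : Kgen q m ∈ Algebra.adjoin ℂ ({Fgen q m, Kgen q m, Kinvgen q m} : Set (Uq q m)) :=
      Algebra.subset_adjoin (by simp)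
    have hKI : Kinvgen q m ∈
        Algebra.adjoin ℂ ({Fgen q m, Kgen q m, Kinvgen q m} : Set (Uq q m)) :=
      Algebra.subset_adjoin (by simp)
    exact add_mem (add_mem (Subalgebra.smul_mem _ hF _)
      (Subalgebra.smul_mem _ (pow_mem hK m) _)) (Subalgebra.smul_mem _ (pow_mem hKI m) _)
  -- Casimir - R is in the left ideal
  have hdiff : Casimir q m - R ∈ {z : Uq q m |
      ∃ (w : Uq q m) (x : ↥(Algebra.adjoin ℂ ({Egen q m} : Set (Uq q m)))),
        η x = 0 ∧ z = w * (x : Uq q m)} := by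
    refine ⟨Fgen q m,
      ⟨Egen q m, Algebra.subset_adjoin (Set.mem_singleton _)⟩ - algebraMap ℂ _ c, ?_, ?_⟩
    · have h0 := map_sub η ⟨Egen q m, Algebra.subset_adjoin (Set.mem_singleton _)⟩
        (algebraMap ℂ _ c)
      rw [h0, AlgHom.commutes, ← hc]
      simp
    · have hcoe : ((⟨Egen q m, Algebra.subset_adjoin (Set.mem_singleton _)⟩ -
          algebraMap ℂ _ c : ↥(Algebra.adjoin ℂ ({Egen q m} : Set (Uq q m)))) : Uq q m) =
          Egen q m - algebraMap ℂ (Uq q m) c := by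
        simp
      rw [hcoe, mul_sub, Algebra.algebraMap_eq_smul_one, mul_smul_comm, mul_one]
      rw [Casimir, hR]
      abel
  -- the evaluation of π(Casimir) and R agree
  have h1 : π (Casimir q m) - R ∈ Submodule.span ℂ {z : Uq q m |
      ∃ (w : Uq q m) (x : ↥(Algebra.adjoin ℂ ({Egen q m} : Set (Uq q m)))),
        η x = 0 ∧ z = w * (x : Uq q m)} := by
    have := hπ2 (Casimir q m)
    have h2 := Submodule.sub_mem _ (Submodule.subset_span hdiff) this
    have h3 : Casimir q m - R - (Casimir q m - π (Casimir q m)) = π (Casimir q m) - R := by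
      abel
    rwa [h3] at h2
  have hev : rho q c m hq0 (π (Casimir q m)) (bV (0, 0)) = rho q c m hq0 R (bV (0, 0)) := by
    have h4 := ev_ker q m hq0 η h1
    rw [map_sub, LinearMap.sub_apply, ← hc] at h4
    exact sub_eq_zero.mp h4
  have h5 : π (Casimir q m) ∈ MSpan q m := adjoin_le_MSpan q m hq0 (hπ1 _)
  have h6 : R ∈ MSpan q m := adjoin_le_MSpan q m hq0 hRadj
  calc π (Casimir q m) = Lmap q m (rho q c m hq0 (π (Casimir q m)) (bV (0, 0))) :=
        (Lmap_ev q c m hq0 h5).symm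
    _ = Lmap q m (rho q c m hq0 R (bV (0, 0))) := by rw [hev]
    _ = R := Lmap_ev q c m hq0 h6
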